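/- Under the setup of the generalized RDD optimality: if a measurable $p:\mathbb{R}\to[0,1]$ satisfies $\mathbb{E}(p(x))=(1+\widetilde z)/2$ and $\mathbb{E}(x\,p(x)) = \mathbb{E}(x\,p_{\widetilde z}(x))$, then $p(x)=p_{\widetilde z}(x)$ almost surely under the law of $x$. -/

import Mathlib

open MeasureTheory Set

/-- If a feasible design attains the maximal short-term gain of the
generalized RDD, it equals the generalized RDD almost surely. -/
theorem stmt2 (μ : Measure ℝ) [IsProbabilityMeasure μ]
    (hmean : ∫ x, x ∂μ = 0)
    (hint2 : Integrable (fun x : ℝ => x^2) μ)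
    (hvar : 0 < ∫ x, x^2 ∂μ)
    (zt : ℝ) (hz : zt ∈ Ioo (-1:ℝ) 1)
    (t : ℝ) (ht : t = sInf {s : ℝ | (1 - zt)/2 ≤ (μ (Iic s)).toReal})
    (prdd : ℝ → ℝ) (hm : Measurable prdd) (h01 : ∀ x, prdd x ∈ Icc (0:ℝ) 1)
    (hgt : ∀ x, t < x → prdd x = 1) (hlt : ∀ x, x < t → prdd x = 0)
    (hfrac : ∫ x, prdd x ∂μ = (1 + zt)/2)
    (p : ℝ → ℝ) (hpm : Measurable p) (hp01 : ∀ x, p x ∈ Icc (0:ℝ) 1)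
    (hpfrac : ∫ x, p x ∂μ = (1 + zt)/2)
    (hpgain : ∫ x, x * p x ∂μ = ∫ x, x * prdd x ∂μ) :
    p =ᵐ[μ] prdd := by
  -- integrability facts
  have hpint : Integrable p μ := by
    refine Integrable.mono' (integrable_const 1) hpm.aestronglyMeasurable
      (ae_of_all _ fun x => ?_)
    have h := hp01 x
    rw [Real.norm_eq_abs, abs_le]
    exact ⟨by linarith [h.1], h.2⟩
  have hrint : Integrable prdd μ := by
    refine Integrable.mono' (integrable_const 1) hm.aestronglyMeasurable
      (ae_of_all _ fun x => ?_)
    have h := h01 x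
    rw [Real.norm_eq_abs, abs_le]
    exact ⟨by linarith [h.1], h.2⟩
  have hxint : Integrable (fun x : ℝ => x) μ := by
    have h2 : MemLp (fun x : ℝ => x) 2 μ :=
      (memLp_two_iff_integrable_sq measurable_id.aestronglyMeasurable).mpr hint2
    exact h2.integrable (by norm_num)
  have hxp : Integrable (fun x => x * p x) μ := by
    refine hxint.abs.mono' ((measurable_id.mul hpm).aestronglyMeasurable)
      (ae_of_all _ fun x => ?_)
    have h := hp01 x
    rw [Real.norm_eq_abs, abs_mul]
    calc |x| * |p x| ≤ |x| * 1 := by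
          refine mul_le_mul_of_nonneg_left ?_ (abs_nonneg x)
          rw [abs_le]; exact ⟨by linarith [h.1], h.2⟩
      _ = |x| := mul_one _
  have hxr : Integrable (fun x => x * prdd x) μ := by
    refine hxint.abs.mono' ((measurable_id.mul hm).aestronglyMeasurable)
      (ae_of_all _ fun x => ?_)
    have h := h01 x
    rw [Real.norm_eq_abs, abs_mul]
    calc |x| * |prdd x| ≤ |x| * 1 := by
          refine mul_le_mul_of_nonneg_left ?_ (abs_nonneg x)
          rw [abs_le]; exact ⟨by linarith [h.1], h.2⟩
      _ = |x| := mul_one _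
  set g : ℝ → ℝ := fun x => (x - t) * (prdd x - p x) with hg_def
  have hg_eq : g = fun x => (x * prdd x - x * p x) - (t * prdd x - t * p x) := by
    funext x; simp only [hg_def]; ring
  have hg_int : Integrable g μ := by
    rw [hg_eq]
    exact (hxr.sub hxp).sub ((hrint.const_mul t).sub (hpint.const_mul t))
  have hg_zero : ∫ x, g x ∂μ = 0 := by
    calc ∫ x, g x ∂μ
        = ∫ x, (x * prdd x - x * p x) - (t * prdd x - t * p x) ∂μ := by rw [hg_eq]
      _ = (∫ x, x * prdd x - x * p x ∂μ) - ∫ x, t * prdd x - t * p x ∂μ :=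
          integral_sub (hxr.sub hxp) ((hrint.const_mul t).sub (hpint.const_mul t))
      _ = ((∫ x, x * prdd x ∂μ) - ∫ x, x * p x ∂μ) -
          ((∫ x, t * prdd x ∂μ) - ∫ x, t * p x ∂μ) := by
          rw [integral_sub hxr hxp, integral_sub (hrint.const_mul t) (hpint.const_mul t)]
      _ = 0 := by
          rw [integral_const_mul, integral_const_mul, hfrac, hpfrac, hpgain]; ring
  have hg_nonneg : ∀ x, 0 ≤ g x := by
    intro x
    simp only [hg_def]
    rcases lt_trichotomy x t with h | h | h
    · have := hlt x h
      have hp := hp01 x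
      have : prdd x - p x ≤ 0 := by linarith [hp.1]
      nlinarith
    · simp [hg_def, h]
    · have := hgt x h
      have hp := hp01 x
      exact mul_nonneg (by linarith) (by linarith [hp.2])
  have hg_ae : g =ᵐ[μ] 0 :=
    (integral_eq_zero_iff_of_nonneg hg_nonneg hg_int).mp hg_zero
  have hae0 : ∀ᵐ x ∂μ, x = t ∨ p x = prdd x := by
    filter_upwards [hg_ae] with x hx
    simp only [Pi.zero_apply, hg_def] at hx
    rcases mul_eq_zero.mp hx with h | h
    · exact Or.inl (by linarith [sub_eq_zero.mp h])
    · exact Or.inr (sub_eq_zero.mp h).symm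
  by_cases h0 : μ {t} = 0
  · have hne : ∀ᵐ x ∂μ, x ≠ t := by
      rw [ae_iff]
      convert h0 using 2
      ext x; simp
    filter_upwards [hae0, hne] with x hx hxne
    exact hx.resolve_left hxne
  · -- atom at t: show p t = prdd t using equal fractions
    have hcompl : ∀ᵐ x ∂μ.restrict {t}ᶜ, x ∈ ({t}ᶜ : Set ℝ) :=
      ae_restrict_mem (measurableSet_singleton t).compl
    have hco : ∫ x in ({t}ᶜ : Set ℝ), p x ∂μ = ∫ x in ({t}ᶜ : Set ℝ), prdd x ∂μ := by
      refine integral_congr_ae ?_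
      filter_upwards [hcompl, ae_restrict_of_ae hae0] with x hx1 hx2
      exact hx2.resolve_left hx1
    have hsing : ∀ f : ℝ → ℝ, ∫ x in ({t} : Set ℝ), f x ∂μ = (μ {t}).toReal * f t := by
      intro f
      rw [Measure.restrict_singleton, integral_smul_measure, integral_dirac]
      simp [smul_eq_mul]
    have hsplit_p : (μ {t}).toReal * p t + ∫ x in ({t}ᶜ : Set ℝ), p x ∂μ = (1 + zt)/2 := by
      rw [← hsing p, integral_add_compl (measurableSet_singleton t) hpint, hpfrac]
    have hsplit_r : (μ {t}).toReal * prdd t + ∫ x in ({t}ᶜ : Set ℝ), prdd x ∂μ = (1 + zt)/2 := by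
      rw [← hsing prdd, integral_add_compl (measurableSet_singleton t) hrint, hfrac]
    have hmu_ne : (μ {t}).toReal ≠ 0 := by
      have : μ {t} ≠ ⊤ := measure_ne_top μ _
      simp [ENNReal.toReal_eq_zero_iff, h0, this]
    have hpt : p t = prdd t := by
      have h1 : (μ {t}).toReal * p t = (μ {t}).toReal * prdd t := by
        rw [hco] at hsplit_p; linarith
      exact mul_left_cancel₀ hmu_ne h1
    filter_upwards [hae0] with x hx
    rcases hx with h | h
    · rw [h]; exact hpt
    · exact h
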